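/- arXiv:1811.02088 — 3 statements merged into one kernel-verified Lean document; each statement's English description precedes it below -/
import Mathlib

section
/- The numerical range of a linear operator on a complex inner product space is a convex subset of the complex numbers. That is, if A : D → H is a linear map defined on a subspace D of a complex inner product space H, then the set ν(A) = { ⟨Ax, x⟩ : x ∈ D, ‖x‖ = 1 } is convex. -/
open Set

private lemma sqabs' (z : ℂ) : ((‖z‖ : ℂ))^2 = (starRingEnd ℂ) z * z := by
  rw [← Complex.normSq_eq_conj_mul_self, ← Complex.sq_norm]; push_cast; ring

private lemma phase' (a b : ℂ) : ∃ ω : ℂ, ‖ω‖ = 1 ∧ ∃ r : ℝ,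
    ω * a + (starRingEnd ℂ) ω * b = (r : ℂ) := by
  by_cases h : a - (starRingEnd ℂ) b = 0
  · refine ⟨1, by simp, 2 * b.re, ?_⟩
    have ha : a = (starRingEnd ℂ) b := by linear_combination h
    simp only [ha, one_mul, map_one]
    rw [add_comm, Complex.add_conj]
  · have habs : ‖a - (starRingEnd ℂ) b‖ ≠ 0 := norm_ne_zero_iff.mpr h
    set w := a - (starRingEnd ℂ) b with hw
    refine ⟨(starRingEnd ℂ) w / (‖w‖ : ℂ), ?_, ?_⟩
    · rw [norm_div]
      simp only [Complex.norm_conj, Complex.norm_real, norm_norm]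
      field_simp
    · refine ⟨(‖a‖ ^ 2 - ‖b‖ ^ 2) / ‖w‖, ?_⟩
      have hwa : (‖w‖ : ℂ) ≠ 0 := by exact_mod_cast habs
      rw [map_div₀, Complex.conj_conj, Complex.conj_ofReal]
      push_cast
      field_simp
      rw [sqabs', sqabs']
      simp only [hw, map_sub, Complex.conj_conj]
      ring

private lemma key' {H : Type*} [NormedAddCommGroup H] [InnerProductSpace ℂ H]
    (D : Submodule ℂ H) (A : D →ₗ[ℂ] H) (x y : D)
    (hx : ‖(x : H)‖ = 1) (hy : ‖(y : H)‖ = 1)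
    (hqx : (inner ℂ (A x) (x : H) : ℂ) = 0) (hqy : (inner ℂ (A y) (y : H) : ℂ) = 1)
    {t : ℝ} (ht : t ∈ Set.Icc (0 : ℝ) 1) :
    ∃ z : D, ‖(z : H)‖ = 1 ∧ (inner ℂ (A z) (z : H) : ℂ) = (t : ℂ) := by
  obtain ⟨ω, hω, r, hr⟩ := phase' (inner ℂ (A x) (y : H)) (inner ℂ (A y) (x : H))
  have hω0 : ω ≠ 0 := by
    intro h; rw [h] at hω; simp at hω
  have hω2 : (starRingEnd ℂ) ω * ω = 1 := by
    rw [← Complex.normSq_eq_conj_mul_self, ← Complex.sq_norm, hω]; norm_num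
  set u : ℝ → D := fun s => ((1 - s : ℝ) : ℂ) • x + ((s : ℂ) * ω) • y with hu
  have hU : ∀ s, ((u s : H)) = ((1 - s : ℝ) : ℂ) • (x : H) + ((s : ℂ) * ω) • (y : H) :=
    fun s => rfl
  have hq : ∀ s : ℝ,
      (inner ℂ (A (u s)) ((u s) : H) : ℂ) = ((s^2 + s*(1-s)*r : ℝ) : ℂ) := by
    intro s
    have hAu : A (u s) = ((1 - s : ℝ) : ℂ) • A x + ((s : ℂ) * ω) • A y := by
      simp [hu, map_add, map_smul]
    rw [hAu, hU]
    simp only [inner_add_left, inner_add_right, inner_smul_left, inner_smul_right,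
      map_mul, Complex.conj_ofReal]
    push_cast
    linear_combination ((1:ℂ) - s)^2 * hqx + ((s:ℂ)*(1 - (s:ℂ))) * hr
      + (s:ℂ)^2 * ((starRingEnd ℂ) ω * ω) * hqy + (s:ℂ)^2 * hω2
  -- u s is never zero
  have hune : ∀ s : ℝ, u s ≠ 0 := by
    intro s h0
    by_cases h1 : ((1 - s : ℝ) : ℂ) = 0
    · rw [hu] at h0
      simp only [h1, zero_smul, zero_add] at h0
      have hs' : (1 - s : ℝ) = 0 := by exact_mod_cast h1
      have hs1 : s = 1 := by linarith
      rw [hs1] at h0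
      push_cast at h0
      rw [one_mul] at h0
      have hy0 : y = 0 := by
        rcases smul_eq_zero.mp h0 with h | h
        · exact absurd h hω0
        · exact h
      rw [hy0] at hy
      simp at hy
    · have h2 : ((1 - s : ℝ) : ℂ) • x = (-((s : ℂ) * ω)) • y := by
        rw [neg_smul]
        exact eq_neg_of_add_eq_zero_left h0
      set c : ℂ := ((1 - s : ℝ) : ℂ)⁻¹ * (-((s : ℂ) * ω)) with hc
      have hxc : x = c • y := by
        calc x = ((1 - s : ℝ) : ℂ)⁻¹ • (((1 - s : ℝ) : ℂ) • x) := by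
              rw [smul_smul, inv_mul_cancel₀ h1, one_smul]
          _ = c • y := by rw [h2, smul_smul, hc]
      have hq0 : (inner ℂ (A x) (x : H) : ℂ) = (starRingEnd ℂ) c * c := by
        rw [hxc, map_smul]
        have : ((c • y : D) : H) = c • (y : H) := rfl
        rw [this, inner_smul_left, inner_smul_right, hqy]
        ring
      rw [hqx] at hq0
      have hc0 : c = 0 := by
        have := hq0.symm
        rcases mul_eq_zero.mp this with h | h
        · simpa using h
        · exact h
      rw [hc0, zero_smul] at hxc
      rw [hxc] at hx
      simp at hx
  have hupos : ∀ s : ℝ, (0:ℝ) < ‖(u s : H)‖ := by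
    intro s
    rw [norm_pos_iff]
    intro h
    exact hune s (by exact_mod_cast Subtype.ext h)
  -- the path function
  set f : ℝ → ℝ := fun s => (s^2 + s*(1-s)*r) / ‖(u s : H)‖^2 with hf
  have hcont : Continuous f := by
    apply Continuous.div
    · fun_prop
    · have hcu : Continuous fun s : ℝ => (u s : H) := by
        simp only [hU]
        fun_prop
      fun_prop
    · intro s
      exact pow_ne_zero 2 (hupos s).ne'
  have hf0 : f 0 = 0 := by simp [hf]
  have hf1 : f 1 = 1 := by
    have hu1 : (u 1 : H) = ω • (y : H) := by
      rw [hU]; push_cast; simp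
    simp only [hf, hu1, norm_smul]
    rw [hy]
    have : ‖ω‖ = 1 := hω
    rw [this]
    norm_num
  have hIVT := intermediate_value_Icc (zero_le_one) hcont.continuousOn
  rw [hf0, hf1] at hIVT
  obtain ⟨s, _, hfs⟩ := hIVT ht
  -- normalize
  refine ⟨((‖(u s : H)‖⁻¹ : ℝ) : ℂ) • u s, ?_, ?_⟩
  · have : (((((‖(u s : H)‖⁻¹ : ℝ) : ℂ) • u s : D)) : H)
        = ((‖(u s : H)‖⁻¹ : ℝ) : ℂ) • (u s : H) := rfl
    rw [this, norm_smul, Complex.norm_real, Real.norm_eq_abs,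
      abs_of_pos (inv_pos.mpr (hupos s))]
    field_simp
    rw [div_self (hupos s).ne']
  · have hcoe : (((((‖(u s : H)‖⁻¹ : ℝ) : ℂ) • u s : D)) : H)
        = ((‖(u s : H)‖⁻¹ : ℝ) : ℂ) • (u s : H) := rfl
    rw [map_smul, hcoe, inner_smul_left, inner_smul_right, hq s, Complex.conj_ofReal,
      ← hfs]
    simp only [hf]
    have hre : ‖(u s : H)‖⁻¹ * (‖(u s : H)‖⁻¹ * (s^2 + s*(1-s)*r))
        = (s^2 + s*(1-s)*r) / ‖(u s : H)‖^2 := by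
      rw [eq_div_iff (pow_ne_zero 2 (hupos s).ne')]
      field_simp [(hupos s).ne']
    exact_mod_cast hre


/-- **Toeplitz–Hausdorff theorem.** The numerical range
`ν(A) = { ⟨Ax, x⟩ : x ∈ D, ‖x‖ = 1 }` of a linear operator `A : D → H` defined on a
subspace `D` of a complex inner product space `H` is a convex subset of `ℂ`. -/
theorem stmt_0 {H : Type*} [NormedAddCommGroup H] [InnerProductSpace ℂ H]
    (D : Submodule ℂ H) (A : D →ₗ[ℂ] H) :
    Convex ℝ {c : ℂ | ∃ x : D, ‖(x : H)‖ = 1 ∧ (inner ℂ (A x) (x : H) : ℂ) = c} := by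
  rintro p ⟨x, hx, hpx⟩ q ⟨y, hy, hqy⟩ a b ha hb hab
  simp only [Set.mem_setOf_eq]
  by_cases hpq : p = q
  · refine ⟨y, hy, ?_⟩
    rw [hqy, hpq, ← add_smul, hab, one_smul]
  · have hqp : q - p ≠ 0 := sub_ne_zero.mpr (Ne.symm hpq)
    set B : D →ₗ[ℂ] H :=
      (starRingEnd ℂ) ((q - p)⁻¹) • A - (starRingEnd ℂ) (p * (q - p)⁻¹) • D.subtype with hB
    have hBval : ∀ z : D, ‖(z : H)‖ = 1 →
        (inner ℂ (B z) (z : H) : ℂ) = ((inner ℂ (A z) (z : H) : ℂ) - p) * (q - p)⁻¹ := by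
      intro z hz
      have hz1 : (inner ℂ ((z : H)) ((z : H)) : ℂ) = 1 := by
        rw [inner_self_eq_norm_sq_to_K, hz]
        norm_num
      simp only [hB, LinearMap.sub_apply, LinearMap.smul_apply, Submodule.subtype_apply]
      rw [inner_sub_left, inner_smul_left, inner_smul_left, Complex.conj_conj,
        Complex.conj_conj, hz1]
      ring
    have hBx : (inner ℂ (B x) (x : H) : ℂ) = 0 := by
      rw [hBval x hx, hpx]
      ring
    have hBy : (inner ℂ (B y) (y : H) : ℂ) = 1 := by
      rw [hBval y hy, hqy, mul_inv_cancel₀ hqp]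
    have htb : b ∈ Set.Icc (0 : ℝ) 1 := ⟨hb, by linarith⟩
    obtain ⟨z, hz, hvz⟩ := key' D B x y hx hy hBx hBy htb
    refine ⟨z, hz, ?_⟩
    have h := (hBval z hz).symm.trans hvz
    have hAz : (inner ℂ (A z) (z : H) : ℂ) = p + (b : ℂ) * (q - p) := by
      have h2 : ((inner ℂ (A z) (z : H) : ℂ) - p) = (b : ℂ) * (q - p) := by
        field_simp at h
        linear_combination h
      linear_combination h2
    have hab' : (a : ℂ) + (b : ℂ) = 1 := by exact_mod_cast hab
    rw [hAz, Complex.real_smul, Complex.real_smul]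
    linear_combination (-p) * hab'
end

section
/- If A is a densely defined closed operator on a complex Hilbert space H, then the operator 1 + A*A is bijective from its domain onto H and its inverse is a bounded operator on H. -/
open LinearPMap

/-- **(von Neumann.)** If `A` is a densely defined closed operator on a complex Hilbert
space `H`, then `1 + A*A` (with its natural domain `{x ∈ D(A) : Ax ∈ D(A*)}`) is a
bijection onto `H` whose inverse is a bounded operator `B` on `H`. -/
theorem stmt_1 {H : Type*} [NormedAddCommGroup H] [InnerProductSpace ℂ H] [CompleteSpace H]
    (A : H →ₗ.[ℂ] H) (hdense : Dense (A.domain : Set H)) (hclosed : A.IsClosed) :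
    ∃ B : H →L[ℂ] H,
      -- `B` is a right inverse: every `h ∈ H` is hit, and `(1 + A*A)(B h) = h`
      (∀ h : H, ∃ (hx : B h ∈ A.domain) (hAx : A ⟨B h, hx⟩ ∈ A.adjoint.domain),
        B h + A.adjoint ⟨A ⟨B h, hx⟩, hAx⟩ = h) ∧
      -- `B` is a left inverse on the domain of `1 + A*A`, so `1 + A*A` is injective
      (∀ (x : A.domain) (hAx : A x ∈ A.adjoint.domain),
        B ((x : H) + A.adjoint ⟨A x, hAx⟩) = (x : H)) := by
  classical
  set e : WithLp 2 (H × H) ≃L[ℂ] H × H :=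
    WithLp.prodContinuousLinearEquiv 2 ℂ H H with he
  set G : Submodule ℂ (WithLp 2 (H × H)) :=
    A.graph.comap (WithLp.linearEquiv 2 ℂ (H × H) : WithLp 2 (H × H) →ₗ[ℂ] H × H) with hG
  have hmemG : ∀ v : WithLp 2 (H × H), v ∈ G ↔ (e v) ∈ A.graph := fun v => Iff.rfl
  have hGclosed : IsClosed (G : Set (WithLp 2 (H × H))) := by
    have : (G : Set (WithLp 2 (H × H))) = e ⁻¹' (A.graph : Set (H × H)) := rfl
    rw [this]
    exact hclosed.preimage e.continuous
  haveI : CompleteSpace G := hGclosed.completeSpace_coe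
  -- characterization of the orthogonal complement of the graph
  have key1 : ∀ w : WithLp 2 (H × H), w ∈ Gᗮ →
      ∃ (hy : (e w).2 ∈ A.adjoint.domain),
        A.adjoint ⟨(e w).2, hy⟩ = -(e w).1 := by
    intro w hw
    have h0 : ∀ x : A.domain, inner (𝕜 := ℂ) (-(e w).1) (x : H) =
        inner (𝕜 := ℂ) ((e w).2) (A x) := by
      intro x
      have hx : e.symm ((x : H), A x) ∈ G := by
        rw [hmemG]
        simp only [e.apply_symm_apply]
        exact A.mem_graph x
      have h5 := hw _ hx
      rw [WithLp.prod_inner_apply] at h5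
      have h6 : inner (𝕜 := ℂ) (x : H) ((e w).1) +
          inner (𝕜 := ℂ) (A x : H) ((e w).2) = 0 := h5
      have h4 : inner (𝕜 := ℂ) (x : H) (-(e w).1) =
          inner (𝕜 := ℂ) (A x : H) ((e w).2) := by
        rw [inner_neg_right]
        linear_combination -h6
      have h7 := congrArg (starRingEnd ℂ) h4
      simpa [inner_conj_symm] using h7
    have hy : (e w).2 ∈ A.adjoint.domain :=
      A.mem_adjoint_domain_of_exists _ ⟨-(e w).1, h0⟩
    exact ⟨hy, adjoint_apply_eq hdense ⟨(e w).2, hy⟩ h0⟩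
  have key2 : ∀ y : A.adjoint.domain,
      e.symm (-(A.adjoint y), (y : H)) ∈ Gᗮ := by
    intro y
    rw [Submodule.mem_orthogonal]
    intro u hu
    obtain ⟨x, hx⟩ := A.mem_graph_iff'.mp ((hmemG u).mp hu)
    have hu' : u = e.symm ((x : H), A x) := by
      apply e.injective
      rw [e.apply_symm_apply, hx]
    rw [hu', WithLp.prod_inner_apply]
    show inner (𝕜 := ℂ) (x : H) (-(A.adjoint y)) +
      inner (𝕜 := ℂ) (A x : H) (y : H) = 0
    have hfa := A.adjoint_isFormalAdjoint hdense y x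
    have hconj : inner (𝕜 := ℂ) (x : H) (A.adjoint y) =
        inner (𝕜 := ℂ) (A x : H) (y : H) := by
      rw [← inner_conj_symm, hfa, inner_conj_symm]
    rw [inner_neg_right, hconj]
    ring
  -- the bounded inverse
  set B : H →L[ℂ] H :=
    (ContinuousLinearMap.fst ℂ H H).comp <|
      (e : WithLp 2 (H × H) →L[ℂ] H × H).comp <|
        (G.subtypeL.comp (Submodule.orthogonalProjectionOnto G)).comp <|
          ((e.symm : H × H →L[ℂ] WithLp 2 (H × H)).comp
            (ContinuousLinearMap.inl ℂ H H)) with hB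
  have hBapp : ∀ h : H,
      B h = (e ((Submodule.orthogonalProjectionOnto G (e.symm (h, 0)) : WithLp 2 (H × H)))).1 := fun h => rfl
  refine ⟨B, ?_, ?_⟩
  · intro h
    set v : WithLp 2 (H × H) := e.symm (h, 0) with hv
    set g : G := Submodule.orthogonalProjectionOnto G v with hg
    have hwmem : v - (g : WithLp 2 (H × H)) ∈ Gᗮ :=
      Submodule.sub_starProjection_mem_orthogonal (K := G) v
    obtain ⟨x, hx⟩ := A.mem_graph_iff'.mp ((hmemG _).mp g.2)
    have hgeq : (g : WithLp 2 (H × H)) = e.symm ((x : H), A x) := by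
      apply e.injective
      rw [e.apply_symm_apply, hx]
    have hBh : B h = (x : H) := by
      rw [hBapp, ← hg, hgeq, e.apply_symm_apply]
    have hew1 : (e (v - (g : WithLp 2 (H × H)))).1 = h - (x : H) := by
      rw [_root_.map_sub e, hv, e.apply_symm_apply, hgeq, e.apply_symm_apply]
      rfl
    have hew2 : (e (v - (g : WithLp 2 (H × H)))).2 = -(A x) := by
      rw [_root_.map_sub e, hv, e.apply_symm_apply, hgeq, e.apply_symm_apply]
      show (0 : H) - A x = -(A x)
      rw [zero_sub]
    obtain ⟨hy, hadj⟩ := key1 _ hwmem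
    have hAxmem : A x ∈ A.adjoint.domain := by
      rw [hew2] at hy
      exact neg_mem_iff.mp hy
    have hx' : B h ∈ A.domain := hBh ▸ x.2
    have hxeq : (⟨B h, hx'⟩ : A.domain) = x := Subtype.ext hBh
    have hAeq : A ⟨B h, hx'⟩ = A x := by rw [hxeq]
    refine ⟨hx', by rw [hAeq]; exact hAxmem, ?_⟩
    -- compute : A† (A x) = h - x
    have hneg : (⟨(e (v - (g : WithLp 2 (H × H)))).2, hy⟩ :
        A.adjoint.domain) = -(⟨A x, hAxmem⟩ : A.adjoint.domain) := by
      apply Subtype.ext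
      simpa using hew2
    rw [hneg, LinearPMap.map_neg, hew1] at hadj
    have hfinal : A.adjoint ⟨A x, hAxmem⟩ = h - (x : H) := by
      have := neg_injective hadj
      exact this
    have hc : A.adjoint ⟨A ⟨B h, hx'⟩, by rw [hAeq]; exact hAxmem⟩ =
        A.adjoint ⟨A x, hAxmem⟩ := by
      congr 1
      exact Subtype.ext hAeq
    rw [hc, hfinal, hBh]
    abel
  · intro x hAx
    set h : H := (x : H) + A.adjoint ⟨A x, hAx⟩ with hh
    have hgmem : e.symm ((x : H), A x) ∈ G := by
      rw [hmemG]
      simp only [e.apply_symm_apply]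
      exact A.mem_graph x
    have hzmem : e.symm (A.adjoint ⟨A x, hAx⟩, -(A x)) ∈ Gᗮ := by
      have := key2 (-(⟨A x, hAx⟩ : A.adjoint.domain))
      rw [LinearPMap.map_neg, neg_neg] at this
      exact this
    have hsum : e.symm (h, 0) = e.symm ((x : H), A x) +
        e.symm (A.adjoint ⟨A x, hAx⟩, -(A x)) := by
      rw [← _root_.map_add]
      congr 1
      rw [Prod.mk_add_mk, hh, add_neg_cancel]
    have hproj : ((Submodule.orthogonalProjectionOnto G (e.symm (h, 0)) : WithLp 2 (H × H))) =
        e.symm ((x : H), A x) :=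
      Submodule.eq_starProjection_of_mem_orthogonal' hgmem hzmem hsum
    rw [hBapp, hproj, e.apply_symm_apply]
end

section
/- Let A be a densely defined closed operator on a complex Hilbert space. A is m-dissipative if and only if the spectrum of A is contained in the closed left half-plane { λ : Re λ ≤ 0 } and ‖(λ − A)⁻¹‖ ≤ 1/Re λ for all λ with Re λ > 0. -/
section Aux
variable {H : Type*} [NormedAddCommGroup H] [InnerProductSpace ℂ H] [CompleteSpace H]

lemma md_bound (A : H →ₗ.[ℂ] H)
    (hdiss : ∀ x : A.domain, (inner ℂ (A x) (x : H) : ℂ).re ≤ 0)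
    (lam : ℂ) (x : A.domain) : lam.re * ‖(x : H)‖ ≤ ‖lam • (x : H) - A x‖ := by
  have h1 : lam.re * ‖(x : H)‖ ^ 2 ≤ (inner ℂ (lam • (x : H) - A x) (x : H) : ℂ).re := by
    have : (inner ℂ (lam • (x : H) - A x) (x : H) : ℂ)
        = (starRingEnd ℂ) lam * (inner ℂ (x : H) (x : H) : ℂ) - inner ℂ (A x) (x : H) := by
      rw [inner_sub_left, inner_smul_left]
    rw [this]
    have hxx : (inner ℂ (x : H) (x : H) : ℂ) = (‖(x : H)‖ : ℂ) ^ 2 := by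
      rw [inner_self_eq_norm_sq_to_K]; norm_cast
    rw [hxx]
    simp only [Complex.sub_re, Complex.mul_re, Complex.conj_re, Complex.conj_im]
    have h2 : (((‖(x : H)‖ : ℂ)) ^ 2).re = ‖(x : H)‖ ^ 2 := by
      norm_cast
    have h3 : (((‖(x : H)‖ : ℂ)) ^ 2).im = 0 := by
      norm_cast
    rw [h2, h3]
    nlinarith [hdiss x]
  have h2 : (inner ℂ (lam • (x : H) - A x) (x : H) : ℂ).re ≤ ‖lam • (x : H) - A x‖ * ‖(x : H)‖ := by
    calc (inner ℂ (lam • (x : H) - A x) (x : H) : ℂ).re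
        ≤ ‖(inner ℂ (lam • (x : H) - A x) (x : H) : ℂ)‖ := Complex.re_le_norm _
      _ ≤ ‖lam • (x : H) - A x‖ * ‖(x : H)‖ := by exact norm_inner_le_norm _ _
  rcases eq_or_lt_of_le (norm_nonneg (x : H)) with h | h
  · rw [← h]; simp
  · have := le_trans h1 h2
    nlinarith

set_option linter.unusedSectionVars false

lemma md_build (A : H →ₗ.[ℂ] H)
    (hdiss : ∀ x : A.domain, (inner ℂ (A x) (x : H) : ℂ).re ≤ 0)
    {lam : ℂ} (hlam : 0 < lam.re)
    (hsurj : ∀ y : H, ∃ x : A.domain, lam • (x : H) - A x = y) :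
    ∃ R : H →L[ℂ] H,
      (∀ h : H, ∃ hx : R h ∈ A.domain, lam • R h - A ⟨R h, hx⟩ = h) ∧
      (∀ x : A.domain, R (lam • (x : H) - A x) = (x : H)) ∧
      ‖R‖ ≤ 1 / lam.re := by
  set T : A.domain →ₗ[ℂ] H := lam • A.domain.subtype - A.toFun with hT
  have hTx : ∀ x : A.domain, T x = lam • (x : H) - A x := fun x => rfl
  have hinj : Function.Injective T := by
    intro a b hab
    have h1 : T (a - b) = 0 := by
      rw [map_sub, hab, sub_self]
    have h2 : lam.re * ‖((a - b : A.domain) : H)‖ ≤ 0 := by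
      calc lam.re * ‖((a - b : A.domain) : H)‖ ≤ ‖T (a - b)‖ := md_bound A hdiss lam _
        _ = 0 := by rw [h1, norm_zero]
    have h3 : ‖((a - b : A.domain) : H)‖ = 0 := by
      nlinarith [norm_nonneg ((a - b : A.domain) : H), hlam]
    have h4 : ((a - b : A.domain) : H) = 0 := norm_eq_zero.mp h3
    have : a - b = 0 := Subtype.ext h4
    exact sub_eq_zero.mp this
  have hsurjT : Function.Surjective T := by
    intro y
    obtain ⟨x, hx⟩ := hsurj y
    exact ⟨x, by rw [hTx, hx]⟩
  let e : A.domain ≃ₗ[ℂ] H := LinearEquiv.ofBijective T ⟨hinj, hsurjT⟩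
  have he : ∀ x : A.domain, e x = T x := fun x => rfl
  let Rlin : H →ₗ[ℂ] H := A.domain.subtype ∘ₗ (e.symm : H →ₗ[ℂ] A.domain)
  have hRlin : ∀ y : H, Rlin y = ((e.symm y : A.domain) : H) := fun y => rfl
  have hbound : ∀ y : H, ‖Rlin y‖ ≤ (1 / lam.re) * ‖y‖ := by
    intro y
    have h1 : lam.re * ‖((e.symm y : A.domain) : H)‖ ≤ ‖T (e.symm y)‖ :=
      md_bound A hdiss lam _
    have h2 : T (e.symm y) = y := by
      rw [← he, e.apply_symm_apply]
    rw [h2] at h1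
    rw [hRlin]
    rw [div_mul_eq_mul_div, le_div_iff₀ hlam, mul_comm]
    linarith
  refine ⟨Rlin.mkContinuous (1 / lam.re) hbound, ?_, ?_, ?_⟩
  · intro h
    have hmem : Rlin h ∈ A.domain := by
      rw [hRlin]; exact (e.symm h).2
    refine ⟨hmem, ?_⟩
    have hsub : (⟨Rlin h, hmem⟩ : A.domain) = e.symm h :=
      Subtype.ext (hRlin h)
    show lam • Rlin h - A ⟨Rlin h, hmem⟩ = h
    rw [hsub, hRlin, ← hTx, ← he, e.apply_symm_apply]
  · intro x
    show Rlin (lam • (x : H) - A x) = (x : H)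
    rw [← hTx, hRlin, ← he, e.symm_apply_apply]
  · exact Rlin.mkContinuous_norm_le (by positivity) hbound

lemma md_step (A : H →ₗ.[ℂ] H)
    (hdiss : ∀ x : A.domain, (inner ℂ (A x) (x : H) : ℂ).re ≤ 0)
    {lam mu : ℂ} (hlam : 0 < lam.re) (hmu : 0 < mu.re)
    (hnear : ‖mu - lam‖ < lam.re)
    (hsurj : ∀ y : H, ∃ x : A.domain, lam • (x : H) - A x = y) :
    ∀ y : H, ∃ x : A.domain, mu • (x : H) - A x = y := by
  obtain ⟨R, hR1, hR2, hR3⟩ := md_build A hdiss hlam hsurj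
  intro y
  set c : ℂ := mu - lam with hc
  set T : H → H := fun z => R (y - c • z) with hTdef
  have hK : ‖R‖ * ‖c‖ < 1 := by
    rcases eq_or_lt_of_le (norm_nonneg R) with h0 | h0
    · rw [← h0]; simpa using zero_lt_one
    · calc ‖R‖ * ‖c‖ ≤ (1 / lam.re) * ‖c‖ := by
            apply mul_le_mul_of_nonneg_right hR3 (norm_nonneg _)
        _ < (1 / lam.re) * lam.re := by
            apply mul_lt_mul_of_pos_left hnear (by positivity)
        _ = 1 := by field_simp
  have hcontr : ContractingWith (Real.toNNReal (‖R‖ * ‖c‖)) T := by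
    constructor
    · rwa [← NNReal.coe_lt_one, Real.coe_toNNReal _ (by positivity)]
    · refine LipschitzWith.of_dist_le_mul fun a b => ?_
      rw [Real.coe_toNNReal _ (by positivity), dist_eq_norm, dist_eq_norm]
      have h1 : T a - T b = R (c • (b - a)) := by
        rw [hTdef]
        simp only []
        rw [← map_sub, smul_sub]
        congr 1
        abel
      calc ‖T a - T b‖ = ‖R (c • (b - a))‖ := by rw [h1]
        _ ≤ ‖R‖ * ‖c • (b - a)‖ := R.le_opNorm _
        _ = ‖R‖ * ‖c‖ * ‖b - a‖ := by
            rw [norm_smul, mul_assoc]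
        _ = ‖R‖ * ‖c‖ * ‖a - b‖ := by rw [norm_sub_rev b a]
  have : Nonempty H := ⟨0⟩
  set x : H := hcontr.fixedPoint T with hxdef
  have hfix : T x = x := hcontr.fixedPoint_isFixedPt
  have hfix' : R (y - c • x) = x := hfix
  obtain ⟨hmem, heq⟩ := hR1 (y - c • x)
  rw [hfix'] at hmem
  refine ⟨⟨x, hmem⟩, ?_⟩
  have hsub : (⟨R (y - c • x), (hR1 (y - c • x)).choose⟩ : A.domain) = (⟨x, hmem⟩ : A.domain) := by
    exact Subtype.ext hfix'
  have heq' : lam • x - A ⟨x, hmem⟩ = y - c • x := by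
    have h2 := (hR1 (y - c • x)).choose_spec
    rw [show (⟨R (y - c • x), _⟩ : A.domain) = (⟨x, hmem⟩ : A.domain) from Subtype.ext hfix'] at h2
    rw [← h2, hfix']
  show mu • x - A ⟨x, hmem⟩ = y
  have : mu • x = lam • x + c • x := by
    rw [hc, ← add_smul]
    ring_nf
  rw [this]
  rw [add_sub_right_comm, heq']
  abel

lemma md_real (A : H →ₗ.[ℂ] H)
    (hdiss : ∀ x : A.domain, (inner ℂ (A x) (x : H) : ℂ).re ≤ 0)
    (h1 : ∀ y : H, ∃ x : A.domain, (1 : ℂ) • (x : H) - A x = y) :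
    ∀ t : ℝ, 0 < t → ∀ y : H, ∃ x : A.domain, ((t : ℂ)) • (x : H) - A x = y := by
  have hpow : ∀ n : ℕ, ∀ y : H, ∃ x : A.domain,
      ((((3/2 : ℝ) ^ n : ℝ) : ℂ)) • (x : H) - A x = y := by
    intro n
    induction n with
    | zero => simpa using h1
    | succ n ih =>
      refine md_step A hdiss (lam := (((3/2 : ℝ) ^ n : ℝ) : ℂ)) ?_ ?_ ?_ ih
      · simp only [Complex.ofReal_re]; positivity
      · simp only [Complex.ofReal_re]; positivity
      · rw [← Complex.ofReal_sub, Complex.norm_real, Real.norm_eq_abs, Complex.ofReal_re]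
        have hp := pow_pos (by norm_num : (0:ℝ) < 3/2) n
        rw [abs_of_nonneg (by rw [pow_succ]; nlinarith : (0:ℝ) ≤ (3/2:ℝ)^(n+1) - (3/2:ℝ)^n)]
        have : (3/2 : ℝ) ^ (n+1) = (3/2) * (3/2)^n := by ring
        rw [this]
        nlinarith [pow_pos (by norm_num : (0:ℝ) < 3/2) n]
  intro t ht
  obtain ⟨n, hn⟩ := pow_unbounded_of_one_lt t (by norm_num : (1:ℝ) < 3/2)
  refine md_step A hdiss (lam := (((3/2 : ℝ) ^ n : ℝ) : ℂ)) ?_ ?_ ?_ (hpow n)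
  · simp only [Complex.ofReal_re]; positivity
  · simpa using ht
  · rw [← Complex.ofReal_sub, Complex.norm_real, Real.norm_eq_abs, Complex.ofReal_re]
    rw [abs_of_nonpos (by linarith : t - (3/2:ℝ)^n ≤ 0)]
    linarith

lemma md_all (A : H →ₗ.[ℂ] H)
    (hdiss : ∀ x : A.domain, (inner ℂ (A x) (x : H) : ℂ).re ≤ 0)
    (h1 : ∀ y : H, ∃ x : A.domain, (1 : ℂ) • (x : H) - A x = y)
    {mu : ℂ} (hmu : 0 < mu.re) :
    ∀ y : H, ∃ x : A.domain, mu • (x : H) - A x = y := by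
  set t : ℝ := mu.re with htdef
  have key : ∀ n : ℕ, ∀ s : ℝ, |s| ≤ n * (t / 2) →
      ∀ y : H, ∃ x : A.domain, ((t : ℂ) + (s : ℂ) * Complex.I) • (x : H) - A x = y := by
    intro n
    induction n with
    | zero =>
      intro s hs
      have hs0 : s = 0 := by
        simp only [Nat.cast_zero, zero_mul] at hs
        exact abs_nonpos_iff.mp hs
      subst hs0
      simpa using md_real A hdiss h1 t hmu
    | succ n ih =>
      intro s hs
      by_cases hle : |s| ≤ n * (t / 2)
      · exact ih s hle
      push_neg at hle
      have hsne : s ≠ 0 := by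
        intro h; rw [h] at hle; simp at hle; nlinarith
      rcases le_or_gt 0 s with hpos | hneg
      · -- s > 0
        have hs' : 0 < s := lt_of_le_of_ne hpos (Ne.symm hsne)
        set s' : ℝ := s - min s (t / 2) with hs'def
        have hsnn : 0 ≤ s' := by
          simp only [hs'def, sub_nonneg]; exact min_le_left s (t / 2)
        have habs' : |s'| ≤ n * (t / 2) := by
          rw [abs_of_nonneg hsnn]
          rcases le_total s (t / 2) with h | h
          · rw [hs'def, min_eq_left h]; simp; positivity
          · rw [hs'def, min_eq_right h]
            rw [abs_of_nonneg hpos] at hs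
            push_cast at hs ⊢
            linarith
        refine md_step A hdiss (lam := (t : ℂ) + (s' : ℂ) * Complex.I) ?_ ?_ ?_ (ih s' habs')
        · simpa using hmu
        · simpa using hmu
        · have hdiff : ((t : ℂ) + (s : ℂ) * Complex.I) - ((t : ℂ) + (s' : ℂ) * Complex.I)
              = ((s - s' : ℝ) : ℂ) * Complex.I := by
            push_cast; ring
          rw [hdiff, norm_mul, Complex.norm_I, mul_one, Complex.norm_real, Real.norm_eq_abs]
          have : s - s' = min s (t / 2) := by rw [hs'def]; ring
          rw [this, abs_of_nonneg (le_min hpos (by positivity))]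
          simp only [Complex.add_re, Complex.ofReal_re, Complex.mul_re, Complex.I_re,
            Complex.I_im, Complex.ofReal_im]
          have := min_le_right s (t / 2)
          nlinarith [min_le_right s (t/2), hmu]
      · -- s < 0
        set s' : ℝ := s + min (-s) (t / 2) with hs'def
        have hsnp : s' ≤ 0 := by
          simp only [hs'def]; linarith [min_le_left (-s) (t / 2)]
        have habs' : |s'| ≤ n * (t / 2) := by
          rw [abs_of_nonpos hsnp]
          rcases le_total (-s) (t / 2) with h | h
          · rw [hs'def, min_eq_left h]; simp; positivity
          · rw [hs'def, min_eq_right h]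
            rw [abs_of_neg hneg] at hs
            push_cast at hs ⊢
            linarith
        refine md_step A hdiss (lam := (t : ℂ) + (s' : ℂ) * Complex.I) ?_ ?_ ?_ (ih s' habs')
        · simpa using hmu
        · simpa using hmu
        · have hdiff : ((t : ℂ) + (s : ℂ) * Complex.I) - ((t : ℂ) + (s' : ℂ) * Complex.I)
              = ((s - s' : ℝ) : ℂ) * Complex.I := by
            push_cast; ring
          rw [hdiff, norm_mul, Complex.norm_I, mul_one, Complex.norm_real, Real.norm_eq_abs]
          have : s - s' = -(min (-s) (t / 2)) := by rw [hs'def]; ring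
          rw [this, abs_neg, abs_of_nonneg (le_min (by linarith) (by positivity))]
          simp only [Complex.add_re, Complex.ofReal_re, Complex.mul_re, Complex.I_re,
            Complex.I_im, Complex.ofReal_im]
          nlinarith [min_le_right (-s) (t/2), hmu]
  obtain ⟨n, hn⟩ := exists_nat_ge (|mu.im| / (t / 2))
  have hbound : |mu.im| ≤ n * (t / 2) := by
    rw [div_le_iff₀ (by positivity : (0:ℝ) < t / 2)] at hn
    linarith
  have := key n mu.im hbound
  have hrw : (t : ℂ) + (mu.im : ℂ) * Complex.I = mu := Complex.re_add_im mu
  rwa [hrw] at this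

end Aux

/-- Let `A` be a densely defined closed operator on a complex Hilbert space.  `A` is
m-dissipative (i.e. `Re⟨Ax, x⟩ ≤ 0` on `D(A)` and `Ran(1 − A) = H`) if and only if every
`λ` with `Re λ > 0` belongs to the resolvent set of `A` (so that the spectrum lies in the
closed left half-plane) and `‖(λ − A)⁻¹‖ ≤ 1 / Re λ` for all such `λ`. -/
theorem stmt_5 {H : Type*} [NormedAddCommGroup H] [InnerProductSpace ℂ H] [CompleteSpace H]
    (A : H →ₗ.[ℂ] H) (hdense : Dense (A.domain : Set H)) (hclosed : A.IsClosed) :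
    ((∀ x : A.domain, (inner ℂ (A x) (x : H) : ℂ).re ≤ 0) ∧
      (∀ y : H, ∃ x : A.domain, (x : H) - A x = y)) ↔
    (∀ lam : ℂ, 0 < lam.re →
      ∃ R : H →L[ℂ] H,
        (∀ h : H, ∃ hx : R h ∈ A.domain, lam • R h - A ⟨R h, hx⟩ = h) ∧
        (∀ x : A.domain, R (lam • (x : H) - A x) = (x : H)) ∧
        ‖R‖ ≤ 1 / lam.re) := by

  constructor
  · rintro ⟨hdiss, hran⟩ lam hlam
    have h1 : ∀ y : H, ∃ x : A.domain, (1 : ℂ) • (x : H) - A x = y := by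
      intro y
      obtain ⟨x, hx⟩ := hran y
      exact ⟨x, by rwa [one_smul]⟩
    exact md_build A hdiss hlam (md_all A hdiss h1 hlam)
  · intro hres
    constructor
    · intro x
      by_contra hpos
      push_neg at hpos
      set r : ℝ := (inner ℂ (A x) (x : H) : ℂ).re with hrdef
      set t : ℝ := (‖A x‖ ^ 2 + 1) / (2 * r) with htdef
      have ht : 0 < t := by positivity
      obtain ⟨R, hR1, hR2, hR3⟩ := hres (t : ℂ) (by simpa using ht)
      have hx : ‖(x : H)‖ ≤ (1 / t) * ‖(t : ℂ) • (x : H) - A x‖ := by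
        calc ‖(x : H)‖ = ‖R ((t : ℂ) • (x : H) - A x)‖ := by rw [hR2 x]
          _ ≤ ‖R‖ * ‖(t : ℂ) • (x : H) - A x‖ := R.le_opNorm _
          _ ≤ (1 / t) * ‖(t : ℂ) • (x : H) - A x‖ := by
              apply mul_le_mul_of_nonneg_right _ (norm_nonneg _)
              simpa using hR3
      have hx2 : t * ‖(x : H)‖ ≤ ‖(t : ℂ) • (x : H) - A x‖ := by
        rw [div_mul_eq_mul_div, le_div_iff₀ ht, mul_comm] at hx
        linarith [hx]
      have hsq : (t * ‖(x : H)‖) ^ 2 ≤ ‖(t : ℂ) • (x : H) - A x‖ ^ 2 := by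
        apply sq_le_sq' _ hx2
        nlinarith [norm_nonneg ((t : ℂ) • (x : H) - A x), mul_nonneg ht.le (norm_nonneg (x : H))]
      have hexp : ‖(t : ℂ) • (x : H) - A x‖ ^ 2
          = t ^ 2 * ‖(x : H)‖ ^ 2 - 2 * t * r + ‖A x‖ ^ 2 := by
        rw [@norm_sub_sq ℂ]
        have h1 : ‖(t : ℂ) • (x : H)‖ ^ 2 = t ^ 2 * ‖(x : H)‖ ^ 2 := by
          rw [norm_smul, mul_pow, Complex.norm_real, Real.norm_eq_abs, sq_abs]
        have h2 : RCLike.re (inner ℂ ((t : ℂ) • (x : H)) (A x) : ℂ) = t * r := by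
          rw [inner_smul_left]
          simp only [RCLike.re_to_complex, Complex.mul_re]
          have hc : (starRingEnd ℂ) ((t : ℂ)) = (t : ℂ) := by
            rw [Complex.conj_ofReal]
          rw [hc]
          have : (inner ℂ ((x : H)) (A x) : ℂ) = (starRingEnd ℂ) (inner ℂ (A x) ((x : H)) : ℂ) := by
            rw [inner_conj_symm]
          rw [this]
          simp only [Complex.ofReal_re, Complex.ofReal_im, Complex.conj_re, Complex.conj_im,
            zero_mul, sub_zero]
          rw [hrdef]
        rw [h1, h2]
        ring
      rw [hexp, mul_pow] at hsq
      have h2tr : 2 * t * r = ‖A x‖ ^ 2 + 1 := by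
        rw [htdef]
        field_simp
      nlinarith [hsq]
    · obtain ⟨R, hR1, -, -⟩ := hres 1 (by norm_num)
      intro y
      obtain ⟨hx, heq⟩ := hR1 y
      exact ⟨⟨R y, hx⟩, by rwa [one_smul] at heq⟩
end
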